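/- arXiv:1508.04106 — 2 statements merged into one kernel-verified Lean document; each statement's English description precedes it below -/
import Mathlib

section
/- Let D ⊆ ℝ² be a bounded open set, let x₀ ∈ D, let r : ℝ → ℝ be continuous and 2π-periodic, and let (r_k)_{k≥1} be a sequence of continuous 2π-periodic functions on ℝ with ‖r_k − r‖_∞ → 0 as k → ∞. Then the Lebesgue measure of the symmetric difference A(r_k, x₀) Δ A(r, x₀) tends to 0 as k → ∞. -/
open MeasureTheory Filter

/-- The angular polar coordinate of a point in the plane (the argument of the
corresponding complex number, taking values in `(-π, π]`). -/
noncomputable def polarAngle (x : EuclideanSpace ℝ (Fin 2)) : ℝ :=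
  Complex.arg ⟨x 0, x 1⟩

/-- The star-shaped inclusion `A(r, x₀) = {x ∈ D : |x − x₀| ≤ r(h(x − x₀))}`. -/
def starSet (D : Set (EuclideanSpace ℝ (Fin 2))) (r : ℝ → ℝ)
    (x₀ : EuclideanSpace ℝ (Fin 2)) : Set (EuclideanSpace ℝ (Fin 2)) :=
  {x | x ∈ D ∧ ‖x - x₀‖ ≤ r (polarAngle (x - x₀))}

open Set
-- graph of a measurable function is null in ℝ × ℝ
lemma graph_null (r : ℝ → ℝ) (hr : Measurable r) :
    volume {p : ℝ × ℝ | p.2 = r p.1} = 0 := by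
  have hm : MeasurableSet {p : ℝ × ℝ | p.2 = r p.1} :=
    measurableSet_eq_fun measurable_snd (hr.comp measurable_fst)
  rw [Measure.volume_eq_prod, Measure.prod_apply hm]
  have h : ∀ x : ℝ, volume (Prod.mk x ⁻¹' {p : ℝ × ℝ | p.2 = r p.1}) = 0 := by
    intro x
    have : Prod.mk x ⁻¹' {p : ℝ × ℝ | p.2 = r p.1} = {r x} := by
      ext y; simp [eq_comm]
    rw [this]; exact measure_singleton _
  simp [h]

lemma polarGraph_null (r : ℝ → ℝ) (hr : Measurable r) :
    volume {p : ℝ × ℝ | ‖(⟨p.1, p.2⟩ : ℂ)‖ = r (Complex.arg ⟨p.1, p.2⟩) ∧ p ≠ 0} = 0 := by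
  set f : ℝ × ℝ → ℝ × ℝ := fun q => (q.2 * Real.cos q.1, q.2 * Real.sin q.1) with hf
  have hsub : {p : ℝ × ℝ | ‖(⟨p.1, p.2⟩ : ℂ)‖ = r (Complex.arg ⟨p.1, p.2⟩) ∧ p ≠ 0}
      ⊆ f '' {q : ℝ × ℝ | q.2 = r q.1} := by
    rintro ⟨a, b⟩ ⟨habs, hne⟩
    refine ⟨(Complex.arg ⟨a, b⟩, ‖(⟨a, b⟩ : ℂ)‖), habs, ?_⟩
    simp only [hf]
    rw [Complex.norm_mul_cos_arg, Complex.norm_mul_sin_arg]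
  refine measure_mono_null hsub ?_
  apply addHaar_image_eq_zero_of_differentiableOn_of_addHaar_eq_zero
  · exact Differentiable.differentiableOn (by fun_prop)
  · exact graph_null r hr

lemma measurable_anglePart (x₀ : EuclideanSpace ℝ (Fin 2)) :
    Measurable (fun x : EuclideanSpace ℝ (Fin 2) => Complex.arg ⟨(x - x₀) 0, (x - x₀) 1⟩) := by
  apply Complex.measurable_arg.comp
  have h0 : Continuous (fun x : EuclideanSpace ℝ (Fin 2) => (x - x₀) 0) := by
    exact (continuous_apply (0 : Fin 2)).comp ((PiLp.continuous_ofLp 2 _).comp (continuous_id.sub continuous_const))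
  have h1 : Continuous (fun x : EuclideanSpace ℝ (Fin 2) => (x - x₀) 1) := by
    exact (continuous_apply (1 : Fin 2)).comp ((PiLp.continuous_ofLp 2 _).comp (continuous_id.sub continuous_const))
  have : (fun x : EuclideanSpace ℝ (Fin 2) => (⟨(x - x₀) 0, (x - x₀) 1⟩ : ℂ))
      = fun x => ((x - x₀) 0 : ℂ) + ((x - x₀) 1 : ℂ) * Complex.I := by
    funext x; rw [Complex.mk_eq_add_mul_I]
  rw [this]
  exact ((Complex.measurable_ofReal.comp h0.measurable).add
    ((Complex.measurable_ofReal.comp h1.measurable).mul measurable_const))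

lemma euclid_norm_eq (y : EuclideanSpace ℝ (Fin 2)) :
    ‖y‖ = ‖(⟨y 0, y 1⟩ : ℂ)‖ := by
  rw [EuclideanSpace.norm_eq, Complex.norm_def, Complex.normSq_mk, Fin.sum_univ_two]
  congr 1
  simp [Real.norm_eq_abs, sq_abs, sq]

lemma euclid_null (x₀ : EuclideanSpace ℝ (Fin 2)) (r : ℝ → ℝ) (hr : Measurable r) :
    volume {x : EuclideanSpace ℝ (Fin 2) |
      ‖x - x₀‖ = r (polarAngle (x - x₀)) ∧ x ≠ x₀} = 0 := by
  have hΦ : MeasurePreserving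
      (fun x : EuclideanSpace ℝ (Fin 2) => ((x - x₀) 0, (x - x₀) 1)) volume volume := by
    have h1 : MeasurePreserving (fun x : EuclideanSpace ℝ (Fin 2) => x - x₀) volume volume :=
      measurePreserving_sub_right volume x₀
    have h2 := PiLp.volume_preserving_ofLp (ι := Fin 2)
    have h3 := volume_preserving_finTwoArrow ℝ
    exact (h3.comp h2).comp h1
  have hpre : {x : EuclideanSpace ℝ (Fin 2) |
        ‖x - x₀‖ = r (polarAngle (x - x₀)) ∧ x ≠ x₀}
      = (fun x : EuclideanSpace ℝ (Fin 2) => ((x - x₀) 0, (x - x₀) 1)) ⁻¹'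
        {p : ℝ × ℝ | ‖(⟨p.1, p.2⟩ : ℂ)‖ = r (Complex.arg ⟨p.1, p.2⟩) ∧ p ≠ 0} := by
    ext x
    simp only [mem_setOf_eq, mem_preimage]
    constructor
    · rintro ⟨h1, h2⟩
      refine ⟨by rw [← euclid_norm_eq]; exact h1, ?_⟩
      intro hc
      apply h2
      have h0 : (x - x₀) 0 = 0 := congrArg Prod.fst hc
      have h1' : (x - x₀) 1 = 0 := congrArg Prod.snd hc
      have : x - x₀ = 0 := by
        ext i
        fin_cases i
        · exact h0
        · exact h1'
      exact sub_eq_zero.mp this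
    · rintro ⟨h1, h2⟩
      refine ⟨by rw [euclid_norm_eq]; exact h1, ?_⟩
      intro hc
      apply h2
      subst hc
      simp
  rw [hpre]
  exact hΦ.quasiMeasurePreserving.preimage_null (polarGraph_null r hr)

theorem stmt1 (D : Set (EuclideanSpace ℝ (Fin 2))) (hDopen : IsOpen D)
    (hDbdd : Bornology.IsBounded D)
    (x₀ : EuclideanSpace ℝ (Fin 2)) (hx₀ : x₀ ∈ D)
    (r : ℝ → ℝ) (hr : Continuous r) (hrper : Function.Periodic r (2 * Real.pi))
    (rk : ℕ → ℝ → ℝ) (hrk : ∀ k, Continuous (rk k))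
    (hrkper : ∀ k, Function.Periodic (rk k) (2 * Real.pi))
    (hconv : TendstoUniformly rk r atTop) :
    Tendsto (fun k => volume (symmDiff (starSet D (rk k) x₀) (starSet D r x₀)))
      atTop (nhds 0) := by
  set g : EuclideanSpace ℝ (Fin 2) → ℝ :=
    fun x => |‖x - x₀‖ - r (polarAngle (x - x₀))| with hg
  have hgm : Measurable g := by
    apply Measurable.abs
    exact ((continuous_id.sub continuous_const).norm.measurable).sub
      (hr.measurable.comp (measurable_anglePart x₀))
  set T : ℕ → Set (EuclideanSpace ℝ (Fin 2)) :=
    fun n => D ∩ {x | g x ≤ 1 / (n + 1)} with hT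
  have hTm : ∀ n, MeasurableSet (T n) := fun n =>
    hDopen.measurableSet.inter (hgm measurableSet_Iic)
  have hTanti : Antitone T := by
    intro m n hmn
    apply inter_subset_inter_right
    intro x hx
    simp only [mem_setOf_eq] at hx ⊢
    refine le_trans hx ?_
    apply one_div_le_one_div_of_le (by positivity)
    have := (Nat.cast_le (α := ℝ)).mpr hmn
    linarith
  have hDfin : volume D ≠ ⊤ := hDbdd.measure_lt_top.ne
  have hInter : volume (⋂ n, T n) = 0 := by
    have hsub : (⋂ n, T n) ⊆
        {x : EuclideanSpace ℝ (Fin 2) |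
          ‖x - x₀‖ = r (polarAngle (x - x₀)) ∧ x ≠ x₀} ∪ {x₀} := by
      intro x hx
      have hxn : ∀ n : ℕ, g x ≤ 1 / (n + 1) := fun n => (mem_iInter.mp hx n).2
      have hx0 : g x ≤ 0 := by
        refine ge_of_tendsto' tendsto_one_div_add_atTop_nhds_zero_nat hxn
      have : g x = 0 := le_antisymm hx0 (abs_nonneg _)
      have heq : ‖x - x₀‖ = r (polarAngle (x - x₀)) := by
        have := abs_eq_zero.mp this
        linarith
      by_cases hxe : x = x₀
      · exact Or.inr hxe
      · exact Or.inl ⟨heq, hxe⟩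
    refine measure_mono_null hsub ?_
    refine measure_union_null (euclid_null x₀ r hr.measurable) (measure_singleton _)
  have hT0 : Tendsto (fun n => volume (T n)) atTop (nhds (volume (⋂ n, T n))) := by
    exact tendsto_measure_iInter_atTop (fun n => (hTm n).nullMeasurableSet) hTanti
      ⟨0, fun h => hDfin (top_le_iff.mp (le_trans (le_of_eq h.symm)
        (measure_mono inter_subset_left)))⟩
  rw [hInter] at hT0
  rw [ENNReal.tendsto_atTop_zero]
  intro ε hε
  obtain ⟨n, hn⟩ : ∃ n, volume (T n) ≤ ε := by
    obtain ⟨N, hN⟩ := (ENNReal.tendsto_atTop_zero.mp hT0) ε hε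
    exact ⟨N, hN N le_rfl⟩
  have hev : ∀ᶠ k in atTop, ∀ θ', dist (r θ') (rk k θ') < 1 / (n + 1) :=
    Metric.tendstoUniformly_iff.mp hconv _ (by positivity)
  obtain ⟨N, hN⟩ := eventually_atTop.mp hev
  refine ⟨N, fun k hk => ?_⟩
  refine le_trans (measure_mono ?_) hn
  intro x hx
  have hd : ∀ θ', |r θ' - rk k θ'| < 1 / (n + 1) := by
    intro θ'; rw [← Real.dist_eq]; exact hN k hk θ'
  rcases Set.mem_symmDiff.mp hx with ⟨⟨hxD, hle⟩, hnot⟩ | ⟨⟨hxD, hle⟩, hnot⟩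
  · refine ⟨hxD, ?_⟩
    have hgt : r (polarAngle (x - x₀)) < ‖x - x₀‖ := by
      by_contra hc
      exact hnot ⟨hxD, le_of_not_gt hc⟩
    have := hd (polarAngle (x - x₀))
    have := abs_lt.mp this
    simp only [mem_setOf_eq, hg]
    rw [abs_le]
    constructor <;> [linarith; linarith]
  · refine ⟨hxD, ?_⟩
    have hgt : rk k (polarAngle (x - x₀)) < ‖x - x₀‖ := by
      by_contra hc
      exact hnot ⟨hxD, le_of_not_gt hc⟩
    have := hd (polarAngle (x - x₀))
    have := abs_lt.mp this
    simp only [mem_setOf_eq, hg]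
    rw [abs_le]
    constructor <;> [linarith; linarith]
end

section
/- Let D ⊆ ℝ² be a bounded open set, let u₊, u₋ > 0, let r : ℝ → ℝ be 2π-periodic and Lipschitz continuous, let x₀ ∈ D, and let (x₀^k)_{k≥1} ⊆ D be a sequence of points with |x₀^k − x₀| → 0 as k → ∞. Then F₂(r, x₀^k) converges to F₂(r, x₀) in Lebesgue measure on D, i.e. for every δ > 0 the Lebesgue measure of {x ∈ D : |F₂(r, x₀^k)(x) − F₂(r, x₀)(x)| > δ} tends to 0 as k → ∞. -/
open MeasureTheory Filter
open scoped symmDiff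

/-- The star-shaped conductivity `F₂(r, x₀) = (u₊ − u₋)·𝟙_{A(r,x₀)} + u₋`. -/
noncomputable def starF (D : Set (EuclideanSpace ℝ (Fin 2))) (uplus uminus : ℝ)
    (r : ℝ → ℝ) (x₀ : EuclideanSpace ℝ (Fin 2)) (x : EuclideanSpace ℝ (Fin 2)) : ℝ :=
  (uplus - uminus) * (starSet D r x₀).indicator (fun _ => (1 : ℝ)) x + uminus

lemma measurable_polarAngle : Measurable polarAngle := by
  have hc : Continuous fun x : EuclideanSpace ℝ (Fin 2) => (⟨x 0, x 1⟩ : ℂ) := by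
    have : ∀ x : EuclideanSpace ℝ (Fin 2),
        (⟨x 0, x 1⟩ : ℂ) = (x 0 : ℂ) + (x 1 : ℂ) * Complex.I := fun x =>
      Complex.mk_eq_add_mul_I _ _
    simp only [this]
    fun_prop
  exact Complex.measurable_arg.comp hc.measurable

theorem stmt4 (D : Set (EuclideanSpace ℝ (Fin 2))) (hDopen : IsOpen D)
    (hDbdd : Bornology.IsBounded D)
    (uplus uminus : ℝ) (huplus : 0 < uplus) (huminus : 0 < uminus)
    (r : ℝ → ℝ) (hrper : Function.Periodic r (2 * Real.pi))
    (K : NNReal) (hrlip : LipschitzWith K r)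
    (x₀ : EuclideanSpace ℝ (Fin 2)) (hx₀ : x₀ ∈ D)
    (x₀k : ℕ → EuclideanSpace ℝ (Fin 2)) (hx₀k : ∀ k, x₀k k ∈ D)
    (hconv : Tendsto x₀k atTop (nhds x₀)) :
    ∀ δ > (0 : ℝ),
      Tendsto
        (fun k => volume {x | x ∈ D ∧
          δ < |starF D uplus uminus r (x₀k k) x - starF D uplus uminus r x₀ x|})
        atTop (nhds 0) := by
  intro δ hδ
  set S : Set (EuclideanSpace ℝ (Fin 2)) := {y | ‖y‖ ≤ r (polarAngle y)} with hSdef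
  have hSmeas : MeasurableSet S :=
    measurableSet_le measurable_norm (hrlip.continuous.measurable.comp measurable_polarAngle)
  have hSfin : volume S ≠ ⊤ := by
    have hsub : S ⊆ Metric.closedBall 0 (|r 0| + K * Real.pi) := by
      intro y hy
      simp only [Metric.mem_closedBall, dist_zero_right]
      have hy' : ‖y‖ ≤ r (polarAngle y) := hy
      have h1 : |r (polarAngle y) - r 0| ≤ K * |polarAngle y - 0| := by
        simpa [Real.dist_eq] using hrlip.dist_le_mul (polarAngle y) 0
      have h2 : |polarAngle y| ≤ Real.pi := Complex.abs_arg_le_pi _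
      have hK : (0 : ℝ) ≤ K := K.coe_nonneg
      have h3 : r (polarAngle y) - r 0 ≤ |r (polarAngle y) - r 0| := le_abs_self _
      have h4 : r 0 ≤ |r 0| := le_abs_self _
      rw [sub_zero] at h1
      nlinarith
    exact ((measure_mono hsub).trans_lt measure_closedBall_lt_top).ne
  -- translation maps as continuous maps
  let g : EuclideanSpace ℝ (Fin 2) → C(EuclideanSpace ℝ (Fin 2), EuclideanSpace ℝ (Fin 2)) :=
    fun c => ⟨fun x => x - c, by fun_prop⟩
  have hgcont : Continuous g := by
    apply ContinuousMap.continuous_of_continuous_uncurry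
    exact continuous_snd.sub continuous_fst
  have key : Tendsto (fun k => volume ((g (x₀k k) ⁻¹' S) ∆ (g x₀ ⁻¹' S))) atTop (nhds 0) :=
    MeasureTheory.tendsto_measure_symmDiff_preimage_nhds_zero
      ((hgcont.tendsto x₀).comp hconv)
      (Eventually.of_forall fun k => measurePreserving_sub_right volume _)
      (measurePreserving_sub_right volume _)
      hSmeas.nullMeasurableSet hSfin
  refine tendsto_of_tendsto_of_tendsto_of_le_of_le tendsto_const_nhds key
    (fun k => zero_le) (fun k => measure_mono ?_)
  rintro x ⟨hxD, hxδ⟩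
  have hind : (starSet D r (x₀k k)).indicator (fun _ => (1:ℝ)) x ≠
      (starSet D r x₀).indicator (fun _ => (1:ℝ)) x := by
    intro h
    rw [starF, starF, h] at hxδ
    simp only [sub_self, abs_zero] at hxδ
    · linarith
  have hmem : ((x - x₀k k) ∈ S) ≠ ((x - x₀) ∈ S) := by
    intro h
    apply hind
    by_cases h1 : (x - x₀k k) ∈ S
    · have h2 : (x - x₀) ∈ S := h ▸ h1
      rw [Set.indicator_of_mem (show x ∈ starSet D r (x₀k k) from ⟨hxD, h1⟩),
        Set.indicator_of_mem (show x ∈ starSet D r x₀ from ⟨hxD, h2⟩)]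
    · have h2 : (x - x₀) ∉ S := h ▸ h1
      rw [Set.indicator_of_notMem (fun hm => h1 hm.2),
        Set.indicator_of_notMem (fun hm => h2 hm.2)]
  rw [Set.mem_symmDiff]
  by_cases h1 : (x - x₀k k) ∈ S
  · by_cases h2 : (x - x₀) ∈ S
    · exact absurd (by rw [eq_iff_iff]; exact iff_of_true h1 h2) hmem
    · exact Or.inl ⟨h1, h2⟩
  · by_cases h2 : (x - x₀) ∈ S
    · exact Or.inr ⟨h2, h1⟩
    · exact absurd (by rw [eq_iff_iff]; exact iff_of_false h1 h2) hmem
end
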